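/- Let f: ℝⁿ → ℝ be convex with level set C = f⁻¹((-∞,0]) ≠ ∅. Define x_{i+1} = x_i - (f(x_i)/‖y_i‖²)·y_i when f(x_i) > 0, where y_i ∈ ∂f(x_i) (the projection of x_i onto the halfspace {x : f(x_i) + ⟨y_i, x - x_i⟩ ≤ 0}). Suppose the sequence {x_i} converges to x̄ with f(x̄) = 0 and 0 ∉ ∂f(x̄), and suppose additionally that x_i → x̄ through the normal cone directions so that for some γ₁ < d(0,∂f(x̄)) and large i, f(x_i) ≥ γ₁‖x_i - x̄‖. Then limsup_{i→∞} ‖x_{i+1} - x̄‖/‖x_i - x̄‖ ≤ √(1 - [γ₁/(2·max_{y∈∂f(x̄)}‖y‖)]²) < 1, i.e., convergence is at least R-linear. -/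

import Mathlib

open RealInnerProductSpace Filter

/-- The convex subdifferential of `f` at `x`. -/
def subdiff {n : ℕ} (f : EuclideanSpace ℝ (Fin n) → ℝ) (x : EuclideanSpace ℝ (Fin n)) :
    Set (EuclideanSpace ℝ (Fin n)) :=
  {y | ∀ z, f x + ⟪y, z - x⟫ ≤ f z}

lemma sqrt_aux1 (s : ℝ) (hs : 0 < s) : Real.sqrt (1 - s) < 1 := by
  rcases le_or_gt (1-s) 0 with h | h
  · rw [Real.sqrt_eq_zero'.2 h]; exact one_pos
  · calc Real.sqrt (1-s) < Real.sqrt 1 := Real.sqrt_lt_sqrt h.le (by linarith)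
      _ = 1 := Real.sqrt_one

lemma sqrt_aux2 (a b c : ℝ) (h : a^2 ≤ c * b^2) (hc : 0 ≤ c) (ha : 0 ≤ a) (hb : 0 ≤ b) :
    a ≤ Real.sqrt c * b := by
  have := Real.sqrt_le_sqrt h
  rwa [Real.sqrt_sq ha, Real.sqrt_mul hc, Real.sqrt_sq hb] at this

/-- Local boundedness of the subdifferential of a finite-dimensional convex function. -/
lemma subdiff_norm_bound {n : ℕ} {f : EuclideanSpace ℝ (Fin n) → ℝ}
    (hconv : ConvexOn ℝ Set.univ f) (w : EuclideanSpace ℝ (Fin n)) :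
    ∃ L : ℝ, ∀ x, ‖x - w‖ ≤ 1 → ∀ u ∈ subdiff f x, ‖u‖ ≤ L := by
  have hcont : Continuous f := by
    rw [← continuousOn_univ]
    exact hconv.continuousOn isOpen_univ
  obtain ⟨a, -, ha⟩ := (isCompact_closedBall w 2).exists_isMaxOn
    ⟨w, Metric.mem_closedBall_self (by norm_num)⟩ hcont.continuousOn
  obtain ⟨b, -, hb⟩ := (isCompact_closedBall w 2).exists_isMinOn
    ⟨w, Metric.mem_closedBall_self (by norm_num)⟩ hcont.continuousOn
  refine ⟨f a - f b, ?_⟩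
  intro x hx u hu
  have hxmem : x ∈ Metric.closedBall w 2 := by
    rw [Metric.mem_closedBall, dist_eq_norm]; linarith
  rcases eq_or_ne u 0 with rfl | h0
  · have h1 : f x ≤ f a := ha hxmem
    have h2 : f b ≤ f x := hb hxmem
    simp only [norm_zero]; linarith
  · have hupos : (0:ℝ) < ‖u‖ := norm_pos_iff.2 h0
    have key := hu (x + ‖u‖⁻¹ • u)
    have hinner : ⟪u, x + ‖u‖⁻¹ • u - x⟫ = ‖u‖ := by
      rw [add_sub_cancel_left, real_inner_smul_right, real_inner_self_eq_norm_sq]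
      field_simp
    rw [hinner] at key
    have hzmem : x + ‖u‖⁻¹ • u ∈ Metric.closedBall w 2 := by
      rw [Metric.mem_closedBall, dist_eq_norm]
      have : x + ‖u‖⁻¹ • u - w = (x - w) + ‖u‖⁻¹ • u := by abel
      rw [this]
      calc ‖(x - w) + ‖u‖⁻¹ • u‖ ≤ ‖x - w‖ + ‖‖u‖⁻¹ • u‖ := norm_add_le _ _
        _ ≤ 1 + 1 := by
            gcongr
            rw [norm_smul, norm_inv, norm_norm, inv_mul_cancel₀ hupos.ne']
        _ = 2 := by norm_num
    have h1 : f (x + ‖u‖⁻¹ • u) ≤ f a := ha hzmem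
    have h2 : f b ≤ f x := hb hxmem
    linarith

set_option maxHeartbeats 1000000 in
/-- Linear convergence of the subgradient projection iteration for the convex
inequality problem. -/
theorem subgradient_projection_linear_convergence
    {n : ℕ} (f : EuclideanSpace ℝ (Fin n) → ℝ)
    (hconv : ConvexOn ℝ Set.univ f)
    (hfeas : {z | f z ≤ 0}.Nonempty)
    (x y : ℕ → EuclideanSpace ℝ (Fin n))
    (hy : ∀ i, y i ∈ subdiff f (x i))
    (hfx : ∀ i, 0 < f (x i)) (hy0 : ∀ i, y i ≠ 0)
    (hiter : ∀ i, x (i + 1) = x i - (f (x i) / ‖y i‖ ^ 2) • y i)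
    (xbar : EuclideanSpace ℝ (Fin n))
    (hlim : Tendsto x atTop (nhds xbar))
    (hfxbar : f xbar = 0)
    (h0 : (0:EuclideanSpace ℝ (Fin n)) ∉ subdiff f xbar)
    (γ₁ : ℝ) (hγ₁pos : 0 < γ₁)
    (hγ₁ : γ₁ < Metric.infDist 0 (subdiff f xbar))
    (hslope : ∃ I, ∀ i ≥ I, γ₁ * ‖x i - xbar‖ ≤ f (x i)) :
    limsup (fun i => ‖x (i + 1) - xbar‖ / ‖x i - xbar‖) atTop ≤
        Real.sqrt (1 - (γ₁ / (2 * sSup (norm '' subdiff f xbar))) ^ 2) ∧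
      Real.sqrt (1 - (γ₁ / (2 * sSup (norm '' subdiff f xbar))) ^ 2) < 1 := by
  set S := subdiff f xbar with hS
  set M := sSup (norm '' S) with hM
  have hcont : Continuous f := by
    rw [← continuousOn_univ]
    exact hconv.continuousOn isOpen_univ
  -- S is nonempty
  have hSne : S.Nonempty := by
    by_contra h
    rw [Set.not_nonempty_iff_eq_empty] at h
    rw [h, Metric.infDist_empty] at hγ₁
    linarith
  -- bound on subdifferentials near xbar
  obtain ⟨L, hL⟩ := subdiff_norm_bound hconv xbar
  have hbdd : BddAbove (norm '' S) := by
    refine ⟨L, ?_⟩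
    rintro - ⟨u, hu, rfl⟩
    exact hL xbar (by simp) u hu
  -- γ₁ < M, 0 < M
  obtain ⟨y₀, hy₀⟩ := hSne
  have hy₀M : ‖y₀‖ ≤ M := le_csSup hbdd ⟨y₀, hy₀, rfl⟩
  have hγM : γ₁ < M := by
    have h1 : Metric.infDist 0 S ≤ ‖y₀‖ := by
      have := Metric.infDist_le_dist_of_mem (x := (0 : EuclideanSpace ℝ (Fin n))) hy₀
      rwa [dist_zero_left] at this
    linarith
  have hMpos : 0 < M := lt_trans hγ₁pos hγM
  -- eventual bound on ‖y i‖
  have hxev : ∀ᶠ i in atTop, ‖x i - xbar‖ ≤ 1 := by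
    filter_upwards [hlim (Metric.closedBall_mem_nhds xbar one_pos)] with i hi
    rwa [Set.mem_preimage, Metric.mem_closedBall, dist_eq_norm] at hi
  have hyev : ∀ᶠ i in atTop, ‖y i‖ ≤ 2 * M := by
    by_contra h
    rw [not_eventually] at h
    have hfr : ∃ᶠ i in atTop, 2 * M < ‖y i‖ ∧ ‖x i - xbar‖ ≤ 1 := by
      refine (h.and_eventually hxev).mono ?_
      rintro i ⟨h1, h2⟩
      exact ⟨lt_of_not_ge h1, h2⟩
    obtain ⟨φ, hφ, hφP⟩ := Filter.extraction_of_frequently_atTop hfr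
    have hmem : ∀ k, y (φ k) ∈ Metric.closedBall (0 : EuclideanSpace ℝ (Fin n)) L := by
      intro k
      rw [Metric.mem_closedBall, dist_zero_right]
      exact hL _ (hφP k).2 _ (hy _)
    obtain ⟨yh, -, ψ, hψ, hconv'⟩ := (isCompact_closedBall
      (0 : EuclideanSpace ℝ (Fin n)) L).tendsto_subseq hmem
    have hxφ : Tendsto (fun k => x (φ (ψ k))) atTop (nhds xbar) :=
      hlim.comp ((hφ.comp hψ).tendsto_atTop)
    have hyhS : yh ∈ S := by
      intro z
      have hk : ∀ k, f (x (φ (ψ k))) + ⟪y (φ (ψ k)), z - x (φ (ψ k))⟫ ≤ f z :=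
        fun k => hy _ z
      have hT : Tendsto (fun k => f (x (φ (ψ k))) + ⟪y (φ (ψ k)), z - x (φ (ψ k))⟫)
          atTop (nhds (f xbar + ⟪yh, z - xbar⟫)) := by
        exact ((hcont.tendsto xbar).comp hxφ).add
          (hconv'.inner (tendsto_const_nhds.sub hxφ))
      exact le_of_tendsto hT (Eventually.of_forall hk)
    have hyhM : ‖yh‖ ≤ M := le_csSup hbdd ⟨yh, hyhS, rfl⟩
    have h2M : 2 * M ≤ ‖yh‖ := by
      refine ge_of_tendsto (hconv'.norm) (Eventually.of_forall fun k => ?_)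
      exact (hφP (ψ k)).1.le
    linarith
  -- the key per-iteration estimate
  obtain ⟨I, hI⟩ := hslope
  have hratio : ∀ᶠ i in atTop, ‖x (i + 1) - xbar‖ / ‖x i - xbar‖ ≤ Real.sqrt (1 - (γ₁ / (2 * M)) ^ 2) := by
    filter_upwards [hyev, eventually_ge_atTop I] with i hyi hiI
    have hfi := hfx i
    have hdi : (0:ℝ) < ‖x i - xbar‖ := by
      rw [norm_pos_iff, sub_ne_zero]
      intro h
      rw [h, hfxbar] at hfi
      exact lt_irrefl 0 hfi
    have hYpos : (0:ℝ) < ‖y i‖ := norm_pos_iff.2 (hy0 i)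
    -- subgradient inequality at xbar
    have hsub := hy i xbar
    rw [hfxbar] at hsub
    have hinn : f (x i) ≤ ⟪y i, x i - xbar⟫ := by
      have : ⟪y i, xbar - x i⟫ = -⟪y i, x i - xbar⟫ := by
        rw [← inner_neg_right, neg_sub]
      rw [this] at hsub
      linarith
    -- square norm computation
    have hnormsq : ‖x (i + 1) - xbar‖ ^ 2 =
        ‖x i - xbar‖ ^ 2 - 2 * (f (x i) / ‖y i‖ ^ 2) * ⟪y i, x i - xbar⟫ +
          (f (x i) / ‖y i‖ ^ 2) ^ 2 * ‖y i‖ ^ 2 := by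
      rw [hiter i, sub_right_comm, norm_sub_sq_real, real_inner_smul_right, norm_smul,
        Real.norm_eq_abs, mul_pow, sq_abs, real_inner_comm (x i - xbar) (y i)]
      ring
    have htval : (f (x i) / ‖y i‖ ^ 2) ^ 2 * ‖y i‖ ^ 2 = f (x i) ^ 2 / ‖y i‖ ^ 2 := by
      field_simp
    have htpos : 0 < f (x i) / ‖y i‖ ^ 2 := div_pos hfi (by positivity)
    have hstep1 : ‖x (i + 1) - xbar‖ ^ 2 ≤ ‖x i - xbar‖ ^ 2 - f (x i) ^ 2 / ‖y i‖ ^ 2 := by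
      have h2 : 2 * (f (x i) / ‖y i‖ ^ 2) * f (x i) ≤
          2 * (f (x i) / ‖y i‖ ^ 2) * ⟪y i, x i - xbar⟫ := by
        apply mul_le_mul_of_nonneg_left hinn; positivity
      have h3 : 2 * (f (x i) / ‖y i‖ ^ 2) * f (x i) = 2 * (f (x i) ^ 2 / ‖y i‖ ^ 2) := by
        field_simp
      rw [hnormsq, htval]
      linarith
    have hslopei := hI i hiI
    have hstep2 : (γ₁ / (2 * M)) ^ 2 * ‖x i - xbar‖ ^ 2 ≤ f (x i) ^ 2 / ‖y i‖ ^ 2 := by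
      have h1 : γ₁ ^ 2 * ‖x i - xbar‖ ^ 2 ≤ f (x i) ^ 2 := by
        have h0' : 0 ≤ γ₁ * ‖x i - xbar‖ := mul_nonneg hγ₁pos.le (norm_nonneg _)
        have := mul_self_le_mul_self h0' hslopei
        nlinarith
      have h2 : ‖y i‖ ^ 2 ≤ (2 * M) ^ 2 := by nlinarith
      rw [div_pow, div_mul_eq_mul_div]
      exact div_le_div₀ (sq_nonneg _) h1 (by positivity) h2
    have hkey : ‖x (i + 1) - xbar‖ ^ 2 ≤ (1 - (γ₁ / (2 * M)) ^ 2) * ‖x i - xbar‖ ^ 2 := by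
      have : (1 - (γ₁ / (2 * M)) ^ 2) * ‖x i - xbar‖ ^ 2 =
          ‖x i - xbar‖ ^ 2 - (γ₁ / (2 * M)) ^ 2 * ‖x i - xbar‖ ^ 2 := by ring
      rw [this]
      linarith [hstep1, hstep2]
    have hd2 : 0 < ‖x i - xbar‖ ^ 2 := by positivity
    have hcnn : (0:ℝ) ≤ 1 - (γ₁ / (2 * M)) ^ 2 := by
      by_contra h
      push_neg at h
      have hneg := mul_neg_of_neg_of_pos h hd2
      linarith [sq_nonneg ‖x (i + 1) - xbar‖, hkey]
    have := sqrt_aux2 _ _ _ hkey hcnn (norm_nonneg _) (norm_nonneg _)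
    rw [div_le_iff₀ hdi]
    exact this
  constructor
  · exact limsup_le_of_le
      ((isBoundedUnder_of ⟨0, fun i => by positivity⟩ :
        IsBoundedUnder (· ≥ ·) atTop fun i => ‖x (i + 1) - xbar‖ / ‖x i - xbar‖).isCoboundedUnder_le)
      hratio
  · apply sqrt_aux1
    positivity
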